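/- Let G₁, G₂ be locally finite simple graphs, x ∈ V₁, y ∈ V₂, and N₁, N₂ ∈ (0,∞]. Then K_{G₁×G₂,(x,y)}(N₁+N₂) ≤ max{K_{G₁,x}(N₁), K_{G₂,y}(N₂)}. -/

import Mathlib

open Finset Filter Topology ENNReal SimpleGraph

noncomputable instance (priority := low) finLocFin {V : Type*} [Finite V] (G : SimpleGraph V) :
    G.LocallyFinite := fun _ => Fintype.ofFinite _

/-- Non-normalized graph Laplacian. -/
noncomputable def lap {V : Type*} (G : SimpleGraph V) [G.LocallyFinite] (f : V → ℝ) (x : V) : ℝ :=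
  ∑ y ∈ G.neighborFinset x, (f y - f x)

/-- Bakry–Émery Γ operator. -/
noncomputable def gam {V : Type*} (G : SimpleGraph V) [G.LocallyFinite] (f g : V → ℝ) (x : V) : ℝ :=
  (lap G (fun v => f v * g v) x - f x * lap G g x - g x * lap G f x) / 2

/-- Bakry–Émery Γ₂ operator. -/
noncomputable def gam2 {V : Type*} (G : SimpleGraph V) [G.LocallyFinite] (f g : V → ℝ) (x : V) : ℝ :=
  (lap G (gam G f g) x - gam G f (lap G g) x - gam G (lap G f) g x) / 2

/-- The coefficient 1/N for N ∈ (0,∞], with 1/∞ = 0. -/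
noncomputable def invN (N : ℝ≥0∞) : ℝ := (N⁻¹).toReal

/-- The vertex `x` satisfies the curvature-dimension inequality CD(K,N). -/
def CD {V : Type*} (G : SimpleGraph V) [G.LocallyFinite] (K : ℝ) (N : ℝ≥0∞) (x : V) : Prop :=
  ∀ f : V → ℝ, gam2 G f f x ≥ invN N * (lap G f x) ^ 2 + K * gam G f f x

section Aux
variable {V : Type*} (G : SimpleGraph V) [G.LocallyFinite]

lemma gam_eq (f g : V → ℝ) (x : V) :
    gam G f g x = (∑ z ∈ G.neighborFinset x, (f z - f x) * (g z - g x)) / 2 := by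
  unfold gam lap
  rw [Finset.mul_sum, Finset.mul_sum, ← Finset.sum_sub_distrib, ← Finset.sum_sub_distrib]
  congr 1
  exact Finset.sum_congr rfl fun z _ => by ring

lemma lap_scale (c d : ℝ) (f : V → ℝ) (x : V) :
    lap G (fun v => c * f v + d) x = c * lap G f x := by
  unfold lap
  rw [Finset.mul_sum]
  exact Finset.sum_congr rfl fun z _ => by ring

lemma gam_scale (c d c' d' : ℝ) (f g : V → ℝ) (x : V) :
    gam G (fun v => c * f v + d) (fun v => c' * g v + d') x = (c * c') * gam G f g x := by
  rw [gam_eq, gam_eq]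
  have : ∑ z ∈ G.neighborFinset x,
        ((c * f z + d) - (c * f x + d)) * ((c' * g z + d') - (c' * g x + d'))
      = (c * c') * ∑ z ∈ G.neighborFinset x, (f z - f x) * (g z - g x) := by
    rw [Finset.mul_sum]
    exact Finset.sum_congr rfl fun z _ => by ring
  rw [this]; ring

end Aux

section Prod
variable {V₁ V₂ : Type*} (G : SimpleGraph V₁) (H : SimpleGraph V₂)
  [G.LocallyFinite] [H.LocallyFinite] [(G.boxProd H).LocallyFinite]

lemma sum_boxProd (φ : V₁ × V₂ → ℝ) (x : V₁) (y : V₂) :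
    ∑ p ∈ (G.boxProd H).neighborFinset (x, y), φ p
      = ∑ u ∈ G.neighborFinset x, φ (u, y) + ∑ v ∈ H.neighborFinset y, φ (x, v) := by
  have hdisj : Disjoint
      ((G.neighborFinset x).map ⟨fun u => (u, y), Prod.mk_left_injective y⟩)
      ((H.neighborFinset y).map ⟨fun v => (x, v), Prod.mk_right_injective x⟩) := by
    rw [Finset.disjoint_left]
    rintro ⟨u, v⟩ h1 h2
    simp only [Finset.mem_map, Function.Embedding.coeFn_mk, Prod.mk.injEq,
      mem_neighborFinset] at h1 h2
    obtain ⟨a, ha, rfl, rfl⟩ := h1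
    obtain ⟨b, hb, h, rfl⟩ := h2
    exact G.irrefl (h ▸ ha)
  have hset : (G.boxProd H).neighborFinset (x, y)
      = ((G.neighborFinset x).map ⟨fun u => (u, y), Prod.mk_left_injective y⟩).disjUnion
        ((H.neighborFinset y).map ⟨fun v => (x, v), Prod.mk_right_injective x⟩) hdisj := by
    ext ⟨u, v⟩
    simp only [mem_neighborFinset, SimpleGraph.boxProd_adj, Finset.mem_disjUnion, Finset.mem_map,
      Function.Embedding.coeFn_mk, Prod.mk.injEq]
    constructor
    · rintro (⟨h, rfl⟩ | ⟨h, rfl⟩)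
      · exact Or.inl ⟨u, by simpa using h, rfl, rfl⟩
      · exact Or.inr ⟨v, by simpa using h, rfl, rfl⟩
    · rintro (⟨a, ha, rfl, rfl⟩ | ⟨a, ha, rfl, rfl⟩)
      · exact Or.inl ⟨by simpa using ha, rfl⟩
      · exact Or.inr ⟨by simpa using ha, rfl⟩
  rw [hset, Finset.sum_disjUnion, Finset.sum_map, Finset.sum_map]
  simp

lemma lap_boxProd (F : V₁ × V₂ → ℝ) (x : V₁) (y : V₂) :
    lap (G.boxProd H) F (x, y)
      = lap G (fun u => F (u, y)) x + lap H (fun v => F (x, v)) y := by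
  unfold lap
  exact sum_boxProd G H (fun p => F p - F (x, y)) x y

lemma gam_boxProd (F₁ F₂ : V₁ × V₂ → ℝ) (x : V₁) (y : V₂) :
    gam (G.boxProd H) F₁ F₂ (x, y)
      = gam G (fun u => F₁ (u, y)) (fun u => F₂ (u, y)) x
        + gam H (fun v => F₁ (x, v)) (fun v => F₂ (x, v)) y := by
  rw [gam_eq, gam_eq, gam_eq,
    sum_boxProd G H (fun p => (F₁ p - F₁ (x, y)) * (F₂ p - F₂ (x, y))) x y]
  ring

variable (c₁ c₂ : ℝ) (f₁ : V₁ → ℝ) (f₂ : V₂ → ℝ)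

lemma lap_boxProd_comb (w : V₁) (z : V₂) :
    lap (G.boxProd H) (fun p => c₁ * f₁ p.1 + c₂ * f₂ p.2) (w, z)
      = c₁ * lap G f₁ w + c₂ * lap H f₂ z := by
  rw [lap_boxProd]
  have h1 : lap G (fun u => c₁ * f₁ (u, z).1 + c₂ * f₂ (u, z).2) w = c₁ * lap G f₁ w :=
    lap_scale G c₁ (c₂ * f₂ z) f₁ w
  have h2 : lap H (fun v => c₁ * f₁ (w, v).1 + c₂ * f₂ (w, v).2) z = c₂ * lap H f₂ z := by
    have : (fun v => c₁ * f₁ (w, v).1 + c₂ * f₂ (w, v).2)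
        = fun v => c₂ * f₂ v + c₁ * f₁ w := by funext v; ring
    rw [this]
    exact lap_scale H c₂ (c₁ * f₁ w) f₂ z
  rw [h1, h2]

lemma gam_boxProd_comb (g₁ : V₁ → ℝ) (g₂ : V₂ → ℝ) (d₁ d₂ : ℝ) (w : V₁) (z : V₂) :
    gam (G.boxProd H) (fun p => c₁ * f₁ p.1 + c₂ * f₂ p.2)
        (fun p => d₁ * g₁ p.1 + d₂ * g₂ p.2) (w, z)
      = (c₁ * d₁) * gam G f₁ g₁ w + (c₂ * d₂) * gam H f₂ g₂ z := by
  rw [gam_boxProd]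
  have h1 : gam G (fun u => c₁ * f₁ (u, z).1 + c₂ * f₂ (u, z).2)
      (fun u => d₁ * g₁ (u, z).1 + d₂ * g₂ (u, z).2) w = (c₁ * d₁) * gam G f₁ g₁ w :=
    gam_scale G c₁ (c₂ * f₂ z) d₁ (d₂ * g₂ z) f₁ g₁ w
  have h2 : gam H (fun v => c₁ * f₁ (w, v).1 + c₂ * f₂ (w, v).2)
      (fun v => d₁ * g₁ (w, v).1 + d₂ * g₂ (w, v).2) z = (c₂ * d₂) * gam H f₂ g₂ z := by
    have e1 : (fun v => c₁ * f₁ (w, v).1 + c₂ * f₂ (w, v).2)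
        = fun v => c₂ * f₂ v + c₁ * f₁ w := by funext v; ring
    have e2 : (fun v => d₁ * g₁ (w, v).1 + d₂ * g₂ (w, v).2)
        = fun v => d₂ * g₂ v + d₁ * g₁ w := by funext v; ring
    rw [e1, e2]
    exact gam_scale H c₂ (c₁ * f₁ w) d₂ (d₁ * g₁ w) f₂ g₂ z
  rw [h1, h2]

lemma gam2_boxProd_comb (x : V₁) (y : V₂) :
    gam2 (G.boxProd H) (fun p => c₁ * f₁ p.1 + c₂ * f₂ p.2)
        (fun p => c₁ * f₁ p.1 + c₂ * f₂ p.2) (x, y)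
      = c₁ ^ 2 * gam2 G f₁ f₁ x + c₂ ^ 2 * gam2 H f₂ f₂ y := by
  set F : V₁ × V₂ → ℝ := fun p => c₁ * f₁ p.1 + c₂ * f₂ p.2 with hF
  have hgamfun : gam (G.boxProd H) F F
      = fun p => (c₁ * c₁) * gam G f₁ f₁ p.1 + (c₂ * c₂) * gam H f₂ f₂ p.2 := by
    funext p
    obtain ⟨w, z⟩ := p
    exact gam_boxProd_comb G H c₁ c₂ f₁ f₂ f₁ f₂ c₁ c₂ w z
  have hlapfun : lap (G.boxProd H) F
      = fun p => c₁ * lap G f₁ p.1 + c₂ * lap H f₂ p.2 := by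
    funext p
    obtain ⟨w, z⟩ := p
    exact lap_boxProd_comb G H c₁ c₂ f₁ f₂ w z
  unfold gam2
  rw [hgamfun, hlapfun]
  have t1 : lap (G.boxProd H)
        (fun p => (c₁ * c₁) * gam G f₁ f₁ p.1 + (c₂ * c₂) * gam H f₂ f₂ p.2) (x, y)
      = (c₁ * c₁) * lap G (gam G f₁ f₁) x + (c₂ * c₂) * lap H (gam H f₂ f₂) y :=
    lap_boxProd_comb G H (c₁ * c₁) (c₂ * c₂) (gam G f₁ f₁) (gam H f₂ f₂) x y
  have t2 : gam (G.boxProd H) F (fun p => c₁ * lap G f₁ p.1 + c₂ * lap H f₂ p.2) (x, y)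
      = (c₁ * c₁) * gam G f₁ (lap G f₁) x + (c₂ * c₂) * gam H f₂ (lap H f₂) y :=
    gam_boxProd_comb G H c₁ c₂ f₁ f₂ (lap G f₁) (lap H f₂) c₁ c₂ x y
  have t3 : gam (G.boxProd H) (fun p => c₁ * lap G f₁ p.1 + c₂ * lap H f₂ p.2) F (x, y)
      = (c₁ * c₁) * gam G (lap G f₁) f₁ x + (c₂ * c₂) * gam H (lap H f₂) f₂ y :=
    gam_boxProd_comb G H c₁ c₂ (lap G f₁) (lap H f₂) f₁ f₂ c₁ c₂ x y
  rw [t1, t2, t3]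
  ring

end Prod

lemma invN_eq (N : ℝ≥0∞) : invN N = (N.toReal)⁻¹ := by
  rw [invN, ENNReal.toReal_inv]

lemma exists_c (N₁ N₂ : ℝ≥0∞) (hN₁ : 0 < N₁) (hN₂ : 0 < N₂) (L₁ L₂ : ℝ) :
    ∃ c₁ c₂ : ℝ, (c₁ ≠ 0 ∨ c₂ ≠ 0) ∧
      invN N₁ * (c₁ * L₁) ^ 2 + invN N₂ * (c₂ * L₂) ^ 2
        ≤ invN (N₁ + N₂) * (c₁ * L₁ + c₂ * L₂) ^ 2 := by
  rcases eq_or_ne N₁ ⊤ with h1 | h1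
  · refine ⟨1, 0, Or.inl one_ne_zero, ?_⟩
    simp [h1, invN]
  rcases eq_or_ne N₂ ⊤ with h2 | h2
  · refine ⟨0, 1, Or.inr one_ne_zero, ?_⟩
    simp [h2, invN]
  -- both finite
  have hn₁ : 0 < N₁.toReal := ENNReal.toReal_pos hN₁.ne' h1
  have hn₂ : 0 < N₂.toReal := ENNReal.toReal_pos hN₂.ne' h2
  rcases eq_or_ne L₁ 0 with hL₁ | hL₁
  · exact ⟨1, 0, Or.inl one_ne_zero, by simp [hL₁]⟩
  rcases eq_or_ne L₂ 0 with hL₂ | hL₂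
  · exact ⟨0, 1, Or.inr one_ne_zero, by simp [hL₂]⟩
  refine ⟨N₁.toReal / L₁, N₂.toReal / L₂, Or.inl (div_ne_zero hn₁.ne' hL₁), ?_⟩
  have e1 : N₁.toReal / L₁ * L₁ = N₁.toReal := div_mul_cancel₀ _ hL₁
  have e2 : N₂.toReal / L₂ * L₂ = N₂.toReal := div_mul_cancel₀ _ hL₂
  rw [e1, e2, invN_eq, invN_eq, invN_eq, ENNReal.toReal_add h1 h2]
  have h12 : 0 < N₁.toReal + N₂.toReal := by linarith
  apply le_of_eq
  field_simp

theorem stmt_18 {V₁ V₂ : Type*} (G : SimpleGraph V₁) (H : SimpleGraph V₂)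
    [G.LocallyFinite] [H.LocallyFinite] [(G.boxProd H).LocallyFinite]
    (x : V₁) (y : V₂) (N₁ N₂ : ℝ≥0∞) (hN₁ : 0 < N₁) (hN₂ : 0 < N₂)
    (k₁ k₂ k : ℝ)
    (hg₁ : IsGreatest {K : ℝ | CD G K N₁ x} k₁)
    (hg₂ : IsGreatest {K : ℝ | CD H K N₂ y} k₂)
    (hg : IsGreatest {K : ℝ | CD (G.boxProd H) K (N₁ + N₂) (x, y)} k) :
    k ≤ max k₁ k₂ := by
  by_contra hcon
  push_neg at hcon
  rw [max_lt_iff] at hcon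
  obtain ⟨hk₁, hk₂⟩ := hcon
  have hnCD₁ : ¬ CD G k N₁ x := fun h => absurd (hg₁.2 h) (not_le.mpr hk₁)
  have hnCD₂ : ¬ CD H k N₂ y := fun h => absurd (hg₂.2 h) (not_le.mpr hk₂)
  rw [CD] at hnCD₁ hnCD₂
  push_neg at hnCD₁ hnCD₂
  obtain ⟨f₁, hf₁⟩ := hnCD₁
  obtain ⟨f₂, hf₂⟩ := hnCD₂
  obtain ⟨c₁, c₂, hc, hineq⟩ := exists_c N₁ N₂ hN₁ hN₂ (lap G f₁ x) (lap H f₂ y)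
  have hCD := hg.1 (fun p => c₁ * f₁ p.1 + c₂ * f₂ p.2)
  rw [ge_iff_le, gam2_boxProd_comb, lap_boxProd_comb] at hCD
  have hgam : gam (G.boxProd H) (fun p => c₁ * f₁ p.1 + c₂ * f₂ p.2)
      (fun p => c₁ * f₁ p.1 + c₂ * f₂ p.2) (x, y)
      = (c₁ * c₁) * gam G f₁ f₁ x + (c₂ * c₂) * gam H f₂ f₂ y :=
    gam_boxProd_comb G H c₁ c₂ f₁ f₂ f₁ f₂ c₁ c₂ x y
  rw [hgam] at hCD
  have e1 : invN N₁ * (c₁ * lap G f₁ x) ^ 2 = c₁ ^ 2 * (invN N₁ * (lap G f₁ x) ^ 2) := by ring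
  have e2 : invN N₂ * (c₂ * lap H f₂ y) ^ 2 = c₂ ^ 2 * (invN N₂ * (lap H f₂ y) ^ 2) := by ring
  have hA₁ : c₁ ^ 2 * gam2 G f₁ f₁ x
      ≤ c₁ ^ 2 * (invN N₁ * (lap G f₁ x) ^ 2 + k * gam G f₁ f₁ x) :=
    mul_le_mul_of_nonneg_left hf₁.le (sq_nonneg c₁)
  have hA₂ : c₂ ^ 2 * gam2 H f₂ f₂ y
      ≤ c₂ ^ 2 * (invN N₂ * (lap H f₂ y) ^ 2 + k * gam H f₂ f₂ y) :=
    mul_le_mul_of_nonneg_left hf₂.le (sq_nonneg c₂)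
  rcases hc with hc | hc
  · have hs : c₁ ^ 2 * gam2 G f₁ f₁ x
        < c₁ ^ 2 * (invN N₁ * (lap G f₁ x) ^ 2 + k * gam G f₁ f₁ x) :=
      mul_lt_mul_of_pos_left hf₁ (by positivity)
    nlinarith [hs, hA₂, hineq, hCD]
  · have hs : c₂ ^ 2 * gam2 H f₂ f₂ y
        < c₂ ^ 2 * (invN N₂ * (lap H f₂ y) ^ 2 + k * gam H f₂ f₂ y) :=
      mul_lt_mul_of_pos_left hf₂ (by positivity)
    nlinarith [hA₁, hs, hineq, hCD]
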